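/- For every integer k ≥ 1, every integer n ≥ 1, and every real x, the k-fold iterated (p,q)-integral ∫_0^1 ⋯ ∫_0^1 (x − t_1·t_2·⋯·t_k)_n d_{p,q}t_1 ⋯ d_{p,q}t_k equals (−1)^n · Σ_{m=0}^{n} S_1(n,m) · Σ_{l=0}^{m} binom(m,l) · (−x)^l / [m−l+1]_{p,q}^k, and this in turn equals (−1)^n · Σ_{m=0}^{n} S_1(n,m,−x) / [m+1]_{p,q}^k. -/

import Mathlib

open Finset

/-- The `(p,q)`-integer `[m]_{p,q} = (p^m - q^m)/(p - q)`. -/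
noncomputable def pqInt (p q : ℝ) (m : ℕ) : ℝ := (p ^ m - q ^ m) / (p - q)

/-- The unsigned Stirling numbers of the first kind, defined by the recurrence
`S1(n+1, m+1) = n * S1(n, m+1) + S1(n, m)`, so that
`x(x+1)⋯(x+n-1) = ∑_{m=0}^{n} S1(n,m) x^m`. -/
def stirling1 : ℕ → ℕ → ℕ
  | 0, 0 => 1
  | 0, _ + 1 => 0
  | _ + 1, 0 => 0
  | n + 1, m + 1 => n * stirling1 n (m + 1) + stirling1 n m

/-- The `(p,q)`-integral `∫_0^1 f(t) d_{p,q}t` for `0 < q < p ≤ 1`. -/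
noncomputable def pqIntegral (p q : ℝ) (f : ℝ → ℝ) : ℝ :=
  (p - q) * ∑' n : ℕ, (q ^ n / p ^ (n + 1)) * f (q ^ n / p ^ (n + 1))

/-- The `k`-fold iterated `(p,q)`-integral
`∫_0^1 ⋯ ∫_0^1 g(t₁ ⋯ t_k) d_{p,q}t₁ ⋯ d_{p,q}t_k`,
taken one variable at a time. -/
noncomputable def iterPqIntegral (p q : ℝ) : ℕ → (ℝ → ℝ) → ℝ
  | 0, g => g 1
  | k + 1, g => pqIntegral p q fun t => iterPqIntegral p q k fun s => g (t * s)

/-- Carlitz's weighted Stirling numbers of the first kind,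
`S1(n,m,x) = ∑_{i=0}^{n-m} binom(m+i,i) S1(n,m+i) x^i`. -/
noncomputable def stirling1W (n m : ℕ) (x : ℝ) : ℝ :=
  ∑ i ∈ Finset.range (n - m + 1), ((m + i).choose i : ℝ) * (stirling1 n (m + i) : ℝ) * x ^ i

lemma stirling1_eq_zero : ∀ n m, n < m → stirling1 n m = 0
  | 0, _ + 1, _ => rfl
  | n + 1, m + 1, h => by
    rw [show stirling1 (n+1) (m+1) = n * stirling1 n (m + 1) + stirling1 n m from rfl,
      stirling1_eq_zero n (m+1) (by omega), stirling1_eq_zero n m (by omega)]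
    simp

lemma stirling1_succ_zero (n : ℕ) : stirling1 (n+1) 0 = 0 := rfl

lemma rising_factorial_eq (n : ℕ) (z : ℝ) :
    ∏ i ∈ Finset.range n, (z + i) = ∑ m ∈ Finset.range (n+1), (stirling1 n m : ℝ) * z ^ m := by
  induction n with
  | zero => simp [stirling1]
  | succ n ih =>
    rw [Finset.prod_range_succ, ih]
    have key : ∑ m ∈ range (n+1), (stirling1 n (m+1) : ℝ) * z^(m+1)
        = ∑ m ∈ range (n+1), (stirling1 n m : ℝ) * z ^ m - (stirling1 n 0 : ℝ) := by
      have h1 := Finset.sum_range_succ' (fun m => (stirling1 n m : ℝ) * z^m) (n+1)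
      have h2 := Finset.sum_range_succ (fun m => (stirling1 n m : ℝ) * z^m) (n+1)
      rw [stirling1_eq_zero n (n+1) (by omega)] at h2
      simp at h1 h2
      linarith
    have hn0 : (n : ℝ) * (stirling1 n 0 : ℝ) = 0 := by
      cases n with
      | zero => simp
      | succ n => simp [stirling1_succ_zero]
    rw [Finset.sum_range_succ' (fun m => (stirling1 (n+1) m : ℝ) * z^m) (n+1)]
    simp only [stirling1_succ_zero]
    have hrec : ∀ m, (stirling1 (n+1) (m+1) : ℝ) = (n:ℝ) * (stirling1 n (m+1):ℝ) + (stirling1 n m:ℝ) := by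
      intro m
      rw [show stirling1 (n+1) (m+1) = n * stirling1 n (m + 1) + stirling1 n m from rfl]
      push_cast; ring
    simp only [hrec]
    have expand : (∑ m ∈ range (n+1), (stirling1 n m:ℝ) * z^m) * (z + n)
        = ∑ m ∈ range (n+1), (stirling1 n m:ℝ) * z^(m+1)
          + (n:ℝ) * ∑ m ∈ range (n+1), (stirling1 n m:ℝ) * z^m := by
      rw [Finset.sum_mul, Finset.mul_sum, ← Finset.sum_add_distrib]
      exact Finset.sum_congr rfl fun m _ => by ring
    have split : ∑ m ∈ range (n+1), ((n:ℝ) * (stirling1 n (m+1):ℝ) + (stirling1 n m:ℝ)) * z^(m+1)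
        = (n:ℝ) * ∑ m ∈ range (n+1), (stirling1 n (m+1):ℝ) * z^(m+1)
          + ∑ m ∈ range (n+1), (stirling1 n m:ℝ) * z^(m+1) := by
      rw [Finset.mul_sum, ← Finset.sum_add_distrib]
      exact Finset.sum_congr rfl fun m _ => by ring
    rw [expand, split, key]
    push_cast
    linarith

section Int
variable {p q : ℝ}

lemma pqInt_pos (hq : 0 < q) (hqp : q < p) (m : ℕ) : 0 < pqInt p q (m+1) := by
  have h1 : q ^ (m+1) < p ^ (m+1) := pow_lt_pow_left₀ hqp hq.le (by omega)
  exact div_pos (by linarith) (by linarith)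

lemma pq_summable (hq : 0 < q) (hqp : q < p) (e : ℕ) :
    Summable (fun n : ℕ => (q ^ n / p ^ (n + 1)) ^ (e + 1)) := by
  have hp0 : 0 < p := lt_trans hq hqp
  have heq : ∀ n : ℕ, (q ^ n / p ^ (n + 1)) ^ (e + 1)
      = (1 / p ^ (e+1)) * ((q / p) ^ (e+1)) ^ n := by
    intro n
    have hp0' : p ≠ 0 := by positivity
    rw [div_pow, div_pow, div_pow, ← pow_mul, ← pow_mul, ← pow_mul, ← pow_mul,
      show (n+1)*(e+1) = e+1 + (e+1)*n by ring, show n*(e+1) = (e+1)*n by ring, pow_add]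
    field_simp
  simp only [heq]
  apply Summable.mul_left
  apply summable_geometric_of_lt_one (by positivity)
  apply pow_lt_one₀ (by positivity) (by rw [div_lt_one hp0]; exact hqp) (by omega)

lemma pq_tsum (hq : 0 < q) (hqp : q < p) (e : ℕ) :
    (p - q) * ∑' n : ℕ, (q ^ n / p ^ (n + 1)) ^ (e + 1) = (pqInt p q (e+1))⁻¹ := by
  have hp0 : 0 < p := lt_trans hq hqp
  have heq : ∀ n : ℕ, (q ^ n / p ^ (n + 1)) ^ (e + 1)
      = (1 / p ^ (e+1)) * ((q / p) ^ (e+1)) ^ n := by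
    intro n
    have hp0' : p ≠ 0 := by positivity
    rw [div_pow, div_pow, div_pow, ← pow_mul, ← pow_mul, ← pow_mul, ← pow_mul,
      show (n+1)*(e+1) = e+1 + (e+1)*n by ring, show n*(e+1) = (e+1)*n by ring, pow_add]
    field_simp
  simp only [heq]
  rw [tsum_mul_left, tsum_geometric_of_lt_one (by positivity)
    (pow_lt_one₀ (by positivity) (by rw [div_lt_one hp0]; exact hqp) (by omega))]
  have h1 : q ^ (e+1) < p ^ (e+1) := pow_lt_pow_left₀ hqp hq.le (by omega)
  rw [pqInt]
  rw [div_pow]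
  field_simp

lemma pqIntegral_monomial_sum (hq : 0 < q) (hqp : q < p) {α : Type*} (s : Finset α)
    (c : α → ℝ) (e : α → ℕ) :
    pqIntegral p q (fun t => ∑ a ∈ s, c a * t ^ e a)
      = ∑ a ∈ s, c a * (pqInt p q (e a + 1))⁻¹ := by
  rw [pqIntegral]
  have h1 : ∀ n : ℕ, (q ^ n / p ^ (n + 1)) * ∑ a ∈ s, c a * (q ^ n / p ^ (n + 1)) ^ e a
      = ∑ a ∈ s, c a * (q ^ n / p ^ (n + 1)) ^ (e a + 1) := by
    intro n
    rw [Finset.mul_sum]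
    exact Finset.sum_congr rfl fun a _ => by rw [pow_succ]; ring
  simp only [h1]
  rw [Summable.tsum_finsetSum (fun a _ => ((pq_summable hq hqp (e a)).mul_left (c a)))]
  rw [Finset.mul_sum]
  exact Finset.sum_congr rfl fun a _ => by
    rw [tsum_mul_left, ← pq_tsum hq hqp (e a)]; ring

lemma iterPqIntegral_monomial_sum (hq : 0 < q) (hqp : q < p) {α : Type*} (s : Finset α)
    (e : α → ℕ) : ∀ (k : ℕ) (c : α → ℝ),
    iterPqIntegral p q k (fun t => ∑ a ∈ s, c a * t ^ e a)
      = ∑ a ∈ s, c a * ((pqInt p q (e a + 1))⁻¹) ^ k := by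
  intro k
  induction k with
  | zero => intro c; simp [iterPqIntegral]
  | succ k ih =>
    intro c
    rw [iterPqIntegral]
    have h1 : (fun t => iterPqIntegral p q k fun sv => ∑ a ∈ s, c a * (t * sv) ^ e a)
        = fun t => ∑ a ∈ s, (c a * ((pqInt p q (e a + 1))⁻¹) ^ k) * t ^ e a := by
      funext t
      have h2 : (fun sv => ∑ a ∈ s, c a * (t * sv) ^ e a)
          = fun sv => ∑ a ∈ s, (c a * t ^ e a) * sv ^ e a := by
        funext sv
        exact Finset.sum_congr rfl fun a _ => by rw [mul_pow]; ring
      rw [h2, ih]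
      exact Finset.sum_congr rfl fun a _ => by ring
    rw [h1, pqIntegral_monomial_sum hq hqp]
    exact Finset.sum_congr rfl fun a _ => by rw [pow_succ]; ring
end Int

lemma prod_neg' (n : ℕ) (f : ℕ → ℝ) :
    ∏ i ∈ range n, -f i = (-1 : ℝ)^n * ∏ i ∈ range n, f i := by
  rw [show (fun i => -f i) = fun i => (-1 : ℝ) * f i from funext fun i => by ring]
  rw [Finset.prod_mul_distrib, Finset.prod_const, Finset.card_range]

lemma binom_expand (m : ℕ) (x y : ℝ) :
    (y - x) ^ m = ∑ l ∈ range (m+1), (m.choose l : ℝ) * (-x)^l * y^(m-l) := by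
  rw [sub_eq_add_neg, add_pow, ← Finset.sum_range_reflect]
  refine Finset.sum_congr rfl fun l hl => ?_
  rw [Finset.mem_range] at hl
  have hlm : l ≤ m := by omega
  rw [show m + 1 - 1 - l = m - l by omega, show m - (m - l) = l by omega,
    Nat.choose_symm hlm]
  ring

lemma reindex_stirlingW (n k : ℕ) (x : ℝ) (F : ℕ → ℝ) :
    ∑ m ∈ range (n+1), (stirling1 n m : ℝ) *
        ∑ l ∈ range (m+1), (m.choose l : ℝ) * x^l * F (m - l)
      = ∑ m ∈ range (n+1), stirling1W n m x * F m := by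
  have hL : ∀ m, (stirling1 n m : ℝ) * ∑ l ∈ range (m+1), (m.choose l : ℝ) * x^l * F (m - l)
      = ∑ l ∈ range (m+1), (stirling1 n m : ℝ) * ((m.choose l : ℝ) * x^l * F (m - l)) :=
    fun m => Finset.mul_sum _ _ _
  have hR : ∀ m, stirling1W n m x * F m
      = ∑ i ∈ range (n - m + 1),
          ((m + i).choose i : ℝ) * (stirling1 n (m + i) : ℝ) * x ^ i * F m := by
    intro m
    rw [stirling1W, Finset.sum_mul]
  simp only [hL, hR]
  rw [Finset.sum_sigma' (range (n+1)) (fun m => range (m+1))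
    (fun m l => (stirling1 n m : ℝ) * ((m.choose l : ℝ) * x^l * F (m - l)))]
  rw [Finset.sum_sigma' (range (n+1)) (fun m => range (n - m + 1))
    (fun m i => ((m + i).choose i : ℝ) * (stirling1 n (m + i) : ℝ) * x ^ i * F m)]
  refine Finset.sum_bij' (fun a _ => (⟨a.1 - a.2, a.2⟩ : Σ _ : ℕ, ℕ))
    (fun a _ => (⟨a.1 + a.2, a.2⟩ : Σ _ : ℕ, ℕ)) ?_ ?_ ?_ ?_ ?_
  · rintro ⟨m, l⟩ h
    simp only [Finset.mem_sigma, Finset.mem_range] at h ⊢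
    omega
  · rintro ⟨a, b⟩ h
    simp only [Finset.mem_sigma, Finset.mem_range] at h ⊢
    omega
  · rintro ⟨m, l⟩ h
    simp only [Finset.mem_sigma, Finset.mem_range] at h
    simp only [Sigma.mk.inj_iff, heq_eq_eq]
    exact ⟨by omega, trivial⟩
  · rintro ⟨a, b⟩ h
    simp only [Finset.mem_sigma, Finset.mem_range] at h
    simp only [Sigma.mk.inj_iff, heq_eq_eq]
    exact ⟨by omega, trivial⟩
  · rintro ⟨m, l⟩ h
    simp only [Finset.mem_sigma, Finset.mem_range] at h
    have hlm : l ≤ m := by omega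
    simp only
    rw [show m - l + l = m by omega]
    ring


theorem pqPolyCauchy_second_kind_eq_sum_stirling1
    (p q : ℝ) (hq : 0 < q) (hqp : q < p) (hp : p ≤ 1)
    (k : ℕ) (hk : 1 ≤ k) (n : ℕ) (hn : 1 ≤ n) (x : ℝ) :
    iterPqIntegral p q k (fun y => ∏ i ∈ Finset.range n, (x - y - (i : ℝ))) =
        (-1 : ℝ) ^ n *
          ∑ m ∈ Finset.range (n + 1),
            (stirling1 n m : ℝ) *
              ∑ l ∈ Finset.range (m + 1),
                (m.choose l : ℝ) * (-x) ^ l / pqInt p q (m - l + 1) ^ (k : ℤ) ∧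
      iterPqIntegral p q k (fun y => ∏ i ∈ Finset.range n, (x - y - (i : ℝ))) =
        (-1 : ℝ) ^ n *
          ∑ m ∈ Finset.range (n + 1),
            stirling1W n m (-x) / pqInt p q (m + 1) ^ (k : ℤ) := by
  have hzpow : ∀ (m : ℕ), pqInt p q m ^ (k : ℤ) = pqInt p q m ^ k := fun m => zpow_natCast _ k
  set σs : Finset (Σ _ : ℕ, ℕ) := (Finset.range (n+1)).sigma (fun m => Finset.range (m+1))
    with hσs
  set c : (Σ _ : ℕ, ℕ) → ℝ :=
    fun a => (-1:ℝ)^n * (stirling1 n a.1 : ℝ) * (a.1.choose a.2 : ℝ) * (-x)^a.2 with hc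
  set e : (Σ _ : ℕ, ℕ) → ℕ := fun a => a.1 - a.2 with he
  have hfun : (fun y => ∏ i ∈ Finset.range n, (x - y - (i : ℝ)))
      = fun y => ∑ a ∈ σs, c a * y ^ e a := by
    funext y
    have h1 : ∏ i ∈ Finset.range n, (x - y - (i : ℝ))
        = (-1:ℝ)^n * ∏ i ∈ Finset.range n, ((y - x) + i) := by
      rw [← prod_neg']
      exact Finset.prod_congr rfl fun i _ => by ring
    rw [h1, rising_factorial_eq]
    simp only [binom_expand]
    rw [Finset.mul_sum]
    have h2 : ∀ m, (-1:ℝ)^n * ((stirling1 n m : ℝ) *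
        ∑ l ∈ range (m+1), (m.choose l : ℝ) * (-x)^l * y^(m-l))
        = ∑ l ∈ range (m+1),
            ((-1:ℝ)^n * (stirling1 n m : ℝ) * (m.choose l : ℝ) * (-x)^l) * y^(m-l) := by
      intro m
      rw [Finset.mul_sum, Finset.mul_sum]
      exact Finset.sum_congr rfl fun l _ => by ring
    simp only [h2]
    rw [Finset.sum_sigma' (range (n+1)) (fun m => range (m+1))
      (fun m l => ((-1:ℝ)^n * (stirling1 n m : ℝ) * (m.choose l : ℝ) * (-x)^l) * y^(m-l))]
  have hmain : iterPqIntegral p q k (fun y => ∏ i ∈ Finset.range n, (x - y - (i : ℝ)))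
      = ∑ a ∈ σs, c a * ((pqInt p q (e a + 1))⁻¹) ^ k := by
    rw [hfun, iterPqIntegral_monomial_sum hq hqp]
  have heq1 : iterPqIntegral p q k (fun y => ∏ i ∈ Finset.range n, (x - y - (i : ℝ))) =
      (-1 : ℝ) ^ n *
        ∑ m ∈ Finset.range (n + 1),
          (stirling1 n m : ℝ) *
            ∑ l ∈ Finset.range (m + 1),
              (m.choose l : ℝ) * (-x) ^ l / pqInt p q (m - l + 1) ^ (k : ℤ) := by
    rw [hmain]
    simp only [hzpow]
    rw [Finset.mul_sum]
    have h3 : ∀ m, (-1:ℝ)^n * ((stirling1 n m : ℝ) *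
        ∑ l ∈ range (m+1), (m.choose l : ℝ) * (-x)^l / pqInt p q (m - l + 1) ^ k)
        = ∑ l ∈ range (m+1),
            ((-1:ℝ)^n * (stirling1 n m : ℝ) * (m.choose l : ℝ) * (-x)^l)
              * ((pqInt p q (m - l + 1))⁻¹) ^ k := by
      intro m
      rw [Finset.mul_sum, Finset.mul_sum]
      exact Finset.sum_congr rfl fun l _ => by
        rw [div_eq_mul_inv, inv_pow]; ring
    simp only [h3]
    rw [Finset.sum_sigma' (range (n+1)) (fun m => range (m+1))
      (fun m l => ((-1:ℝ)^n * (stirling1 n m : ℝ) * (m.choose l : ℝ) * (-x)^l)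
        * ((pqInt p q (m - l + 1))⁻¹) ^ k)]
  refine ⟨heq1, ?_⟩
  rw [heq1]
  congr 1
  have h4 : ∀ m l : ℕ, (m.choose l : ℝ) * (-x) ^ l / pqInt p q (m - l + 1) ^ (k : ℤ)
      = (m.choose l : ℝ) * (-x) ^ l * (pqInt p q ((m - l) + 1) ^ (k : ℤ))⁻¹ := fun m l => by
    rw [div_eq_mul_inv]
  have h5 : ∀ m : ℕ, stirling1W n m (-x) / pqInt p q (m + 1) ^ (k : ℤ)
      = stirling1W n m (-x) * (pqInt p q (m + 1) ^ (k : ℤ))⁻¹ := fun m => by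
    rw [div_eq_mul_inv]
  simp only [h4, h5]
  exact reindex_stirlingW n k (-x) (fun j => (pqInt p q (j + 1) ^ (k : ℤ))⁻¹)
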